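/- Fix α ∈ ℕ and w ∈ D, and suppose that in the sequence a the points a_n = a_{n-1} = … = a_{n-α} = w. Then for every n ≥ α and every z ∈ D, K_α(z;w) − S_{n+1}(K_α)(z;w) = (−1)^α · (conj(w)/(1−|w|²))^{α+1} · ((w−z)/(1−conj(w)z))^{α+1} · B_{n−α}(z)·conj(B_{n−α}(w)) / (conj(w)z − 1), where K_α(z;w) = 1/(1 − z·conj(w))^{2+α} is the weighted Bergman kernel and S_{n+1}(K_α)(z;w) = Σ_{m=0}^{n} c_m(K_α(·;w))·φ_m(z) is the Fourier partial sum of K_α(·;w) in the Takenaka–Malmquist system. -/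

import Mathlib

open Complex MeasureTheory Finset

/-- The unimodular factor `|c|/c`, set to `-1` when `c = 0`. -/
noncomputable def unitFactor (c : ℂ) : ℂ :=
  if c = 0 then -1 else (‖c‖ : ℂ) / c

/-- The Takenaka–Malmquist system generated by the sequence `a`. -/
noncomputable def TM (a : ℕ → ℂ) (k : ℕ) (z : ℂ) : ℂ :=
  ((Real.sqrt (1 - ‖a k‖ ^ 2) : ℝ) : ℂ) / (1 - (starRingEnd ℂ) (a k) * z) *
    ∏ j ∈ Finset.range k, (-(unitFactor (a j))) * ((z - a j) / (1 - (starRingEnd ℂ) (a j) * z))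

/-- The Blaschke product of degree `k` associated with the sequence `a` (with `τ = 1`). -/
noncomputable def Blaschke (a : ℕ → ℂ) (k : ℕ) (z : ℂ) : ℂ :=
  ∏ j ∈ Finset.range k, (z - a j) / (1 - (starRingEnd ℂ) (a j) * z)

/-- Integral over the unit circle with respect to the normalized Lebesgue measure σ
(complex-valued integrand). -/
noncomputable def circleAvg (f : ℂ → ℂ) : ℂ :=
  (1 / (2 * Real.pi) : ℂ) * ∫ θ in (0:ℝ)..(2 * Real.pi), f (Complex.exp (θ * Complex.I))

/-- Integral over the unit circle with respect to the normalized Lebesgue measure σ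
(real-valued integrand). -/
noncomputable def circleAvgR (f : ℂ → ℝ) : ℝ :=
  (1 / (2 * Real.pi)) * ∫ θ in (0:ℝ)..(2 * Real.pi), f (Complex.exp (θ * Complex.I))

/-- The Fourier coefficient `c_m(f)` of `f` in the Takenaka–Malmquist system. -/
noncomputable def fourierCoef (a : ℕ → ℂ) (f : ℂ → ℂ) (m : ℕ) : ℂ :=
  circleAvg (fun t => f t * (starRingEnd ℂ) (TM a m t))

/-- The weighted Bergman kernel `K_α(z; w) = 1/(1 - z·conj w)^(2+α)`. -/
noncomputable def bergman (α : ℕ) (w z : ℂ) : ℂ :=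
  1 / (1 - z * (starRingEnd ℂ) w) ^ (2 + α)

/-- The partial sum `S_{n+1}(K_α)(z; w)` of the Fourier series of `K_α(·; w)` in the
Takenaka–Malmquist system. -/
noncomputable def partialSum (a : ℕ → ℂ) (α : ℕ) (w : ℂ) (n : ℕ) (z : ℂ) : ℂ :=
  ∑ m ∈ Finset.range (n + 1), fourierCoef a (bergman α w) m * TM a m z


open Metric

lemma one_sub_mul_ne (x y : ℂ) (hx : ‖x‖ < 1) (hy : ‖y‖ ≤ 1) :
    1 - x * y ≠ 0 := by
  intro h
  have : (1:ℂ) = x * y := by linear_combination h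
  have := congrArg (‖·‖) this
  simp [map_mul] at this
  nlinarith [norm_nonneg y, norm_nonneg x]

lemma sub_ne_of_circle {t x : ℂ} (ht : ‖t‖ = 1) (hx : ‖x‖ < 1) :
    t - x ≠ 0 := by
  intro h
  have : t = x := by linear_combination h
  rw [this] at ht; rw [ht] at hx; exact lt_irrefl _ hx

lemma circle_ne_zero {t : ℂ} (ht : ‖t‖ = 1) : t ≠ 0 := by
  intro h; simp [h] at ht

lemma conj_circle {t : ℂ} (ht : ‖t‖ = 1) : (starRingEnd ℂ) t = t⁻¹ := by
  have h0 : t ≠ 0 := circle_ne_zero ht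
  field_simp
  rw [mul_comm, Complex.mul_conj]
  norm_cast
  rw [← Complex.sq_norm, ht]; norm_num

lemma unitFactor_mul_conj (c : ℂ) : (starRingEnd ℂ) (unitFactor c) * unitFactor c = 1 := by
  unfold unitFactor
  by_cases h : c = 0
  · simp [h]
  · simp only [if_neg h]
    rw [map_div₀, Complex.conj_ofReal]
    have h2 : ‖c‖ ≠ 0 := by simpa using h
    field_simp
    rw [div_eq_iff ((map_ne_zero _).mpr h), Complex.mul_conj']

noncomputable def Btil (a : ℕ → ℂ) (k : ℕ) (t : ℂ) : ℂ :=
  ∏ j ∈ Finset.range k, (1 - (starRingEnd ℂ) (a j) * t) / (t - a j)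

lemma inv_denom_ne {x t : ℂ} (ht : ‖t‖ = 1) (hx : ‖x‖ < 1) :
    (1 : ℂ) - x * t⁻¹ ≠ 0 := by
  have ht0 : t ≠ 0 := circle_ne_zero ht
  have h1 : t - x ≠ 0 := sub_ne_of_circle ht hx
  intro h
  apply h1
  have := congrArg (· * t) h
  linear_combination h * t + inv_mul_cancel_right₀ ht0 x

lemma conj_TM_mul (a : ℕ → ℂ) (ha : ∀ k, ‖(a k)‖ < 1) (m : ℕ)
    {t : ℂ} (ht : ‖t‖ = 1) {z : ℂ} (hz : ‖z‖ < 1) :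
    (starRingEnd ℂ) (TM a m t) * TM a m z =
      (((1 - ‖(a m)‖ ^ 2 : ℝ)) : ℂ) * t / ((t - a m) * (1 - (starRingEnd ℂ) (a m) * z))
        * (Blaschke a m z * Btil a m t) := by
  have ht0 : t ≠ 0 := circle_ne_zero ht
  have htc := conj_circle ht
  unfold TM Blaschke Btil
  simp only [map_mul, map_div₀, map_prod, map_neg, map_sub, map_one, Complex.conj_conj,
    Complex.conj_ofReal, htc]
  rw [mul_mul_mul_comm, ← Finset.prod_mul_distrib]
  have hmain : ∀ j ∈ Finset.range m,
      (-(starRingEnd ℂ) (unitFactor (a j))) * ((t⁻¹ - (starRingEnd ℂ) (a j)) / (1 - a j * t⁻¹)) *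
        ((-(unitFactor (a j))) * ((z - a j) / (1 - (starRingEnd ℂ) (a j) * z))) =
      ((z - a j) / (1 - (starRingEnd ℂ) (a j) * z)) *
        ((1 - (starRingEnd ℂ) (a j) * t) / (t - a j)) := by
    intro j _
    have h1 : t - a j ≠ 0 := sub_ne_of_circle ht (ha j)
    have h2 : (1 : ℂ) - a j * t⁻¹ ≠ 0 := inv_denom_ne ht (ha j)
    have h3 : (1 : ℂ) - (starRingEnd ℂ) (a j) * z ≠ 0 :=
      one_sub_mul_ne _ _ (by simpa using ha j) (le_of_lt hz)
    have hu := unitFactor_mul_conj (a j)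
    have step : (-(starRingEnd ℂ) (unitFactor (a j))) *
          ((t⁻¹ - (starRingEnd ℂ) (a j)) / (1 - a j * t⁻¹)) *
          ((-(unitFactor (a j))) * ((z - a j) / (1 - (starRingEnd ℂ) (a j) * z))) =
        ((t⁻¹ - (starRingEnd ℂ) (a j)) / (1 - a j * t⁻¹)) *
          ((z - a j) / (1 - (starRingEnd ℂ) (a j) * z)) := by
      linear_combination ((t⁻¹ - (starRingEnd ℂ) (a j)) / (1 - a j * t⁻¹)) *
        ((z - a j) / (1 - (starRingEnd ℂ) (a j) * z)) * hu
    rw [step]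
    field_simp
  rw [Finset.prod_congr rfl hmain, Finset.prod_mul_distrib]
  have hsq : ((Real.sqrt (1 - ‖(a m)‖ ^ 2) : ℝ) : ℂ) *
      ((Real.sqrt (1 - ‖(a m)‖ ^ 2) : ℝ) : ℂ) =
      (((1 - ‖(a m)‖ ^ 2 : ℝ)) : ℂ) := by
    rw [← Complex.ofReal_mul, Real.mul_self_sqrt (by nlinarith [ha m, norm_nonneg (a m)])]
  have h1 : t - a m ≠ 0 := sub_ne_of_circle ht (ha m)
  have h2 : (1 : ℂ) - a m * t⁻¹ ≠ 0 := inv_denom_ne ht (ha m)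
  have h3 : (1 : ℂ) - (starRingEnd ℂ) (a m) * z ≠ 0 :=
    one_sub_mul_ne _ _ (by simpa using ha m) (le_of_lt hz)
  rw [div_mul_div_comm, hsq]
  field_simp

lemma abs_sq_cast (x : ℂ) : (((1 - ‖x‖ ^ 2 : ℝ)) : ℂ) = 1 - x * (starRingEnd ℂ) x := by
  rw [Complex.mul_conj]
  push_cast [Complex.sq_norm]
  ring

lemma CD (a : ℕ → ℂ) (ha : ∀ k, ‖(a k)‖ < 1) {z : ℂ} (hz : ‖z‖ < 1)
    (N : ℕ) {t : ℂ} (ht : ‖t‖ = 1) :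
    ∑ m ∈ Finset.range N, (starRingEnd ℂ) (TM a m t) * TM a m z =
      t * (1 - Blaschke a N z * Btil a N t) / (t - z) := by
  have htz : t - z ≠ 0 := sub_ne_of_circle ht hz
  induction N with
  | zero => simp [Blaschke, Btil]
  | succ N ih =>
    rw [Finset.sum_range_succ, ih, conj_TM_mul a ha N ht hz]
    have hB : Blaschke a (N + 1) z = Blaschke a N z * ((z - a N) / (1 - (starRingEnd ℂ) (a N) * z)) :=
      Finset.prod_range_succ _ _
    have hBt : Btil a (N + 1) t = Btil a N t * ((1 - (starRingEnd ℂ) (a N) * t) / (t - a N)) :=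
      Finset.prod_range_succ _ _
    rw [hB, hBt, abs_sq_cast]
    have h1 : t - a N ≠ 0 := sub_ne_of_circle ht (ha N)
    have h3 : (1 : ℂ) - (starRingEnd ℂ) (a N) * z ≠ 0 :=
      one_sub_mul_ne _ _ (by simpa using ha N) (le_of_lt hz)
    have h3' : (1 : ℂ) - z * (starRingEnd ℂ) (a N) ≠ 0 := by rw [mul_comm]; exact h3
    field_simp
    ring

lemma abs_exp_circle (θ : ℝ) : ‖(Complex.exp (θ * Complex.I))‖ = 1 :=
  Complex.norm_exp_ofReal_mul_I θ

lemma circleAvg_congr {f g : ℂ → ℂ} (h : ∀ t, ‖t‖ = 1 → f t = g t) :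
    circleAvg f = circleAvg g := by
  unfold circleAvg
  congr 1
  apply intervalIntegral.integral_congr
  intro θ _
  exact h _ (abs_exp_circle θ)

lemma circleAvg_inv (f : ℂ → ℂ) : circleAvg f = circleAvg (fun t => f t⁻¹) := by
  unfold circleAvg
  congr 1
  have := intervalIntegral.integral_comp_sub_left (a := 0) (b := 2 * Real.pi)
    (fun x : ℝ => f (Complex.exp (x * Complex.I))) (2 * Real.pi)
  simp only [sub_self, sub_zero] at this
  rw [← this]
  apply intervalIntegral.integral_congr
  intro θ _
  simp only
  congr 1
  have : ((2 * Real.pi - θ : ℝ) : ℂ) * Complex.I = 2 * Real.pi * Complex.I + (-θ) * Complex.I := by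
    push_cast; ring
  rw [this, Complex.exp_add, Complex.exp_two_pi_mul_I, one_mul, ← Complex.exp_neg]
  congr 1
  push_cast; ring

lemma circleAvg_cauchy {F : ℂ → ℂ} (hF : DifferentiableOn ℂ F (Metric.closedBall 0 1))
    {p : ℂ} (hp : ‖p‖ < 1) :
    circleAvg (fun t => t * F t / (t - p)) = F p := by
  have hc : DiffContOnCl ℂ F (Metric.ball 0 1) := by
    apply DifferentiableOn.diffContOnCl
    rwa [closure_ball (0 : ℂ) one_ne_zero]
  have hmem : p ∈ Metric.ball (0 : ℂ) 1 := by
    simpa [Metric.mem_ball, Complex.dist_eq] using hp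
  have h := hc.circleIntegral_sub_inv_smul hmem
  simp only [circleIntegral, deriv_circleMap, circleMap, smul_eq_mul, Complex.ofReal_one,
    zero_add, one_mul] at h
  have h2 : ∫ θ in (0:ℝ)..(2 * Real.pi),
      Complex.exp (θ * Complex.I) * Complex.I *
        ((Complex.exp (θ * Complex.I) - p)⁻¹ * F (Complex.exp (θ * Complex.I))) =
      Complex.I * ∫ θ in (0:ℝ)..(2 * Real.pi),
        Complex.exp (θ * Complex.I) * F (Complex.exp (θ * Complex.I)) /
          (Complex.exp (θ * Complex.I) - p) := by
    rw [← intervalIntegral.integral_const_mul]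
    apply intervalIntegral.integral_congr
    intro θ _
    simp only
    ring
  rw [h2] at h
  unfold circleAvg
  have hI : (Complex.I : ℂ) ≠ 0 := Complex.I_ne_zero
  have h3 : ∫ θ in (0:ℝ)..(2 * Real.pi),
      Complex.exp (θ * Complex.I) * F (Complex.exp (θ * Complex.I)) /
        (Complex.exp (θ * Complex.I) - p) = 2 * Real.pi * F p := by
    apply mul_left_cancel₀ hI
    rw [h]
    ring
  rw [h3]
  have hpi : (Real.pi : ℂ) ≠ 0 := by
    simpa using Real.pi_ne_zero
  field_simp

lemma mem_sphere_abs {t : ℂ} (h : ‖t‖ = 1) : t ∈ Metric.sphere (0:ℂ) 1 := by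
  simp [Complex.dist_eq]; exact h

lemma abs_of_sphere {t : ℂ} (h : t ∈ Metric.sphere (0:ℂ) 1) : ‖t‖ = 1 := by
  simpa [Complex.dist_eq] using h

lemma contOn_denom {x : ℂ} (hx : ‖x‖ < 1) :
    ∀ t ∈ Metric.sphere (0:ℂ) 1, (1 : ℂ) - x * t ≠ 0 := fun t ht =>
  one_sub_mul_ne x t hx (le_of_eq (abs_of_sphere ht))

lemma contOn_TM (a : ℕ → ℂ) (ha : ∀ k, ‖(a k)‖ < 1) (m : ℕ) :
    ContinuousOn (TM a m) (Metric.sphere (0:ℂ) 1) := by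
  unfold TM
  apply ContinuousOn.mul
  · exact ContinuousOn.div continuousOn_const
      (by fun_prop)
      (fun t ht => contOn_denom (by simpa using ha m) t ht)
  · apply continuousOn_finset_prod
    intro j _
    apply ContinuousOn.mul continuousOn_const
    exact ContinuousOn.div (by fun_prop) (by fun_prop)
      (fun t ht => contOn_denom (by simpa using ha j) t ht)

lemma contOn_Btil (a : ℕ → ℂ) (ha : ∀ k, ‖(a k)‖ < 1) (m : ℕ) :
    ContinuousOn (Btil a m) (Metric.sphere (0:ℂ) 1) := by
  unfold Btil
  apply continuousOn_finset_prod
  intro j _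
  exact ContinuousOn.div (by fun_prop) (by fun_prop)
    (fun t ht => sub_ne_of_circle (abs_of_sphere ht) (ha j))

lemma contOn_bergman (α : ℕ) {w : ℂ} (hw : ‖w‖ < 1) :
    ContinuousOn (bergman α w) (Metric.sphere (0:ℂ) 1) := by
  unfold bergman
  apply ContinuousOn.div continuousOn_const (by fun_prop)
  intro t ht
  apply pow_ne_zero
  have : ‖((starRingEnd ℂ) w)‖ < 1 := by simpa using hw
  have h := one_sub_mul_ne ((starRingEnd ℂ) w) t this (le_of_eq (abs_of_sphere ht))
  intro hc; apply h; rw [← hc]; ring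

lemma intervalIntegrable_circle {f : ℂ → ℂ}
    (hf : ContinuousOn f (Metric.sphere (0:ℂ) 1)) :
    IntervalIntegrable (fun θ : ℝ => f (Complex.exp (θ * Complex.I)))
      MeasureTheory.volume 0 (2 * Real.pi) := by
  apply Continuous.intervalIntegrable
  apply hf.comp_continuous (by fun_prop)
  intro θ
  exact mem_sphere_abs (abs_exp_circle θ)

lemma partialSum_eq_circleAvg (a : ℕ → ℂ) (ha : ∀ k, ‖(a k)‖ < 1)
    (α : ℕ) {w : ℂ} (hw : ‖w‖ < 1) (n : ℕ) (z : ℂ) :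
    partialSum a α w n z = circleAvg (fun t =>
      bergman α w t * ∑ m ∈ Finset.range (n+1), (starRingEnd ℂ) (TM a m t) * TM a m z) := by
  unfold partialSum fourierCoef circleAvg
  simp only
  trans ∑ m ∈ Finset.range (n+1), (1/(2*(Real.pi:ℂ))) *
      ((∫ θ in (0:ℝ)..(2*Real.pi), bergman α w (Complex.exp (θ*Complex.I)) *
        (starRingEnd ℂ) (TM a m (Complex.exp (θ*Complex.I)))) * TM a m z)
  · exact Finset.sum_congr rfl (fun m _ => by push_cast; ring)
  trans (1/(2*(Real.pi:ℂ))) * ∑ m ∈ Finset.range (n+1),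
      ∫ θ in (0:ℝ)..(2*Real.pi), (bergman α w (Complex.exp (θ*Complex.I)) *
        (starRingEnd ℂ) (TM a m (Complex.exp (θ*Complex.I)))) * TM a m z
  · rw [Finset.mul_sum]
    exact Finset.sum_congr rfl (fun m _ => by rw [intervalIntegral.integral_mul_const])
  have hcast : ((1:ℂ)/(2*(Real.pi:ℂ))) = ((1:ℂ)/(2*Real.pi)) := by push_cast; ring
  rw [hcast]
  congr 1
  rw [← intervalIntegral.integral_finset_sum]
  · apply intervalIntegral.integral_congr
    intro θ _
    simp only [Finset.mul_sum]
    exact Finset.sum_congr rfl (fun m _ => by ring)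
  · intro m _
    apply intervalIntegrable_circle
      (f := fun t => (bergman α w t * (starRingEnd ℂ) (TM a m t)) * TM a m z)
    apply ContinuousOn.mul _ continuousOn_const
    exact ContinuousOn.mul (contOn_bergman α hw)
      (Complex.continuous_conj.comp_continuousOn (contOn_TM a ha m))

lemma circleAvg_sub_mul {f g : ℂ → ℂ} (c : ℂ)
    (hf : ContinuousOn f (Metric.sphere (0:ℂ) 1))
    (hg : ContinuousOn g (Metric.sphere (0:ℂ) 1)) :
    circleAvg (fun t => f t - c * g t) = circleAvg f - c * circleAvg g := by
  unfold circleAvg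
  rw [intervalIntegral.integral_sub (intervalIntegrable_circle hf)
    ((intervalIntegrable_circle hg).const_mul c), intervalIntegral.integral_const_mul]
  ring

lemma Btil_inv (a : ℕ → ℂ) (ha : ∀ k, ‖(a k)‖ < 1) (k : ℕ)
    {u : ℂ} (hu : ‖u‖ = 1) :
    Btil a k u⁻¹ = ∏ j ∈ Finset.range k, (u - (starRingEnd ℂ) (a j)) / (1 - a j * u) := by
  unfold Btil
  apply Finset.prod_congr rfl
  intro j _
  have hu0 : u ≠ 0 := circle_ne_zero hu
  have huinv : ‖u⁻¹‖ = 1 := by rw [norm_inv, hu]; norm_num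
  have h1 : (1:ℂ) - a j * u ≠ 0 := one_sub_mul_ne _ _ (ha j) (le_of_eq hu)
  have h2 : u⁻¹ - a j ≠ 0 := sub_ne_of_circle huinv (ha j)
  rw [div_eq_div_iff h2 h1]
  field_simp

lemma bergman_inv (α : ℕ) {w : ℂ} (hw : ‖w‖ < 1)
    {u : ℂ} (hu : ‖u‖ = 1) :
    bergman α w u⁻¹ = u ^ (2 + α) / (u - (starRingEnd ℂ) w) ^ (2 + α) := by
  unfold bergman
  have hu0 : u ≠ 0 := circle_ne_zero hu
  have h1 : u - (starRingEnd ℂ) w ≠ 0 := sub_ne_of_circle hu (by simpa using hw)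
  have key : (1:ℂ) - u⁻¹ * (starRingEnd ℂ) w = (u - (starRingEnd ℂ) w) * u⁻¹ := by
    field_simp
  rw [key, mul_pow, inv_pow, div_eq_mul_inv, one_mul, mul_inv, inv_inv]
  ring

lemma keyfrac (α : ℕ) (x d : ℂ) :
    ((-1:ℂ))^α * ((x)/d)^(α+1) = -(((-x)/d)^(α+1)) := by
  rw [show -x/d = -(x/d) by ring, neg_pow, pow_succ]
  ring

lemma abstract_inv (u A B C Qu : ℂ) (α : ℕ) (hu0 : u ≠ 0)
    (h1 : A ≠ 0) (h2 : B ≠ 0) (h3 : C ≠ 0) :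
    u ^ ((α+1)+1) / A ^ ((α+1)+1) * (Qu * (A / B) ^ (α + 1)) * u⁻¹ / (C * u⁻¹) =
    u * (u ^ (α+1) * Qu / (B ^ (α + 1) * C)) / A := by
  rw [pow_succ, pow_succ, div_pow]
  field_simp
  ring

/-- Lemma 2: if `a_n = a_{n-1} = … = a_{n-α} = w ∈ D`, then for every
`n ≥ α` and every `z ∈ D`,
`K_α(z;w) − S_{n+1}(K_α)(z;w) = (−1)^α · (conj(w)/(1−|w|²))^{α+1} ·
((w−z)/(1−conj(w)z))^{α+1} · B_{n−α}(z)·conj(B_{n−α}(w)) / (conj(w)z − 1)`. -/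
theorem bergman_kernel_remainder (a : ℕ → ℂ) (ha : ∀ k, ‖(a k)‖ < 1)
    (α : ℕ) (w : ℂ) (hw : ‖w‖ < 1)
    (n : ℕ) (hn : α ≤ n) (haw : ∀ k, n - α ≤ k → k ≤ n → a k = w)
    (z : ℂ) (hz : ‖z‖ < 1) :
    bergman α w z - partialSum a α w n z =
      (-1) ^ α * ((starRingEnd ℂ) w / ((1 - ‖w‖ ^ 2 : ℝ) : ℂ)) ^ (α + 1) *
        ((w - z) / (1 - (starRingEnd ℂ) w * z)) ^ (α + 1) *
        (Blaschke a (n - α) z * (starRingEnd ℂ) (Blaschke a (n - α) w)) /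
          ((starRingEnd ℂ) w * z - 1) := by
  have hcw : ‖((starRingEnd ℂ) w)‖ < 1 := by simpa using hw
  have hcontg1 : ContinuousOn (fun t => t * bergman α w t / (t - z))
      (Metric.sphere (0:ℂ) 1) := by
    apply ContinuousOn.div (ContinuousOn.mul continuousOn_id (contOn_bergman α hw)) (by fun_prop)
    exact fun t ht => sub_ne_of_circle (abs_of_sphere ht) hz
  have hcontg2 : ContinuousOn (fun t => bergman α w t * Btil a (n+1) t * t / (t - z))
      (Metric.sphere (0:ℂ) 1) := by
    apply ContinuousOn.div _ (by fun_prop) (fun t ht => sub_ne_of_circle (abs_of_sphere ht) hz)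
    exact ((contOn_bergman α hw).mul (contOn_Btil a ha (n+1))).mul continuousOn_id
  have hsum : partialSum a α w n z = circleAvg (fun t =>
      t * bergman α w t / (t - z) -
        Blaschke a (n+1) z * (bergman α w t * Btil a (n+1) t * t / (t - z))) := by
    rw [partialSum_eq_circleAvg a ha α hw n z]
    apply circleAvg_congr
    intro t ht
    rw [CD a ha hz (n+1) ht]
    ring
  have hdiffK : DifferentiableOn ℂ (bergman α w) (Metric.closedBall 0 1) := by
    unfold bergman
    apply DifferentiableOn.div (differentiableOn_const _) (by fun_prop)
    intro t ht
    apply pow_ne_zero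
    intro hc
    have htle : ‖t‖ ≤ 1 := by
      simpa [Complex.dist_eq] using (Metric.mem_closedBall.mp ht)
    exact one_sub_mul_ne _ _ hcw htle (by linear_combination hc)
  have hg1 : circleAvg (fun t => t * bergman α w t / (t - z)) = bergman α w z :=
    circleAvg_cauchy hdiffK hz
  set Q : ℂ → ℂ :=
    fun ζ => ∏ j ∈ Finset.range (n - α), (ζ - (starRingEnd ℂ) (a j)) / (1 - a j * ζ)
    with hQdef
  set F₀ : ℂ → ℂ :=
    fun ζ => ζ ^ (1 + α) * Q ζ / ((1 - w * ζ) ^ (α + 1) * (1 - z * ζ)) with hF0def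
  have hball_le : ∀ t : ℂ, t ∈ Metric.closedBall (0:ℂ) 1 → ‖t‖ ≤ 1 := by
    intro t ht
    simpa [Complex.dist_eq] using (Metric.mem_closedBall.mp ht)
  have hdiffF₀ : DifferentiableOn ℂ F₀ (Metric.closedBall 0 1) := by
    rw [hF0def]
    apply DifferentiableOn.div
    · apply DifferentiableOn.mul (by fun_prop)
      rw [hQdef]
      apply DifferentiableOn.fun_finsetProd
      intro j _
      apply DifferentiableOn.div (by fun_prop) (by fun_prop)
      exact fun t ht => one_sub_mul_ne _ _ (ha j) (hball_le t ht)
    · fun_prop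
    · intro t ht
      exact mul_ne_zero (pow_ne_zero _ (one_sub_mul_ne _ _ hw (hball_le t ht)))
        (one_sub_mul_ne _ _ hz (hball_le t ht))
  have hg2 : circleAvg (fun t => bergman α w t * Btil a (n+1) t * t / (t - z)) =
      F₀ ((starRingEnd ℂ) w) := by
    rw [circleAvg_inv]
    rw [circleAvg_congr (g := fun u => u * F₀ u / (u - (starRingEnd ℂ) w)) ?_]
    · exact circleAvg_cauchy hdiffF₀ hcw
    · intro u hu
      have hu0 : u ≠ 0 := circle_ne_zero hu
      have huinv : ‖u⁻¹‖ = 1 := by rw [norm_inv, hu]; norm_num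
      rw [bergman_inv α hw hu, Btil_inv a ha (n+1) hu]
      have hprodsplit : ∏ j ∈ Finset.range (n+1),
          (u - (starRingEnd ℂ) (a j)) / (1 - a j * u) =
          Q u * ((u - (starRingEnd ℂ) w) / (1 - w * u)) ^ (α + 1) := by
        rw [show n + 1 = (n - α) + (α + 1) by omega, Finset.prod_range_add, hQdef]
        congr 1
        rw [Finset.prod_congr rfl (fun i hi => ?_), Finset.prod_const, Finset.card_range]
        rw [haw (n - α + i) (by omega)
          (by simp only [Finset.mem_range] at hi; omega)]
      rw [hprodsplit]
      have h1 : u - (starRingEnd ℂ) w ≠ 0 := sub_ne_of_circle hu hcw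
      have h2 : (1:ℂ) - w * u ≠ 0 := one_sub_mul_ne _ _ hw (le_of_eq hu)
      have h3 : (1:ℂ) - z * u ≠ 0 := one_sub_mul_ne _ _ hz (le_of_eq hu)
      have h4 : u⁻¹ - z ≠ 0 := sub_ne_of_circle huinv hz
      have e1 : u⁻¹ - z = (1 - z * u) * u⁻¹ := by field_simp
      simp only [hF0def]
      rw [e1, show 2 + α = (α + 1) + 1 by omega, show (1:ℕ) + α = α + 1 by omega]
      exact abstract_inv u _ _ _ (Q u) α hu0 h1 h2 h3
  rw [hsum, circleAvg_sub_mul _ hcontg1 hcontg2, hg1, hg2, sub_sub_cancel]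
  have hQcw : Q ((starRingEnd ℂ) w) = (starRingEnd ℂ) (Blaschke a (n - α) w) := by
    rw [hQdef]
    unfold Blaschke
    rw [map_prod]
    exact Finset.prod_congr rfl (fun j _ => by
      simp [map_div₀, map_sub, map_mul, Complex.conj_conj])
  have hBz : Blaschke a (n+1) z =
      Blaschke a (n-α) z * ((z - w)/(1 - (starRingEnd ℂ) w * z)) ^ (α+1) := by
    unfold Blaschke
    rw [show n + 1 = (n - α) + (α + 1) by omega, Finset.prod_range_add]
    congr 1
    rw [Finset.prod_congr rfl (fun i hi => ?_), Finset.prod_const, Finset.card_range]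
    rw [haw (n - α + i) (by omega) (by simp only [Finset.mem_range] at hi; omega)]
  rw [hBz, hF0def]
  simp only
  rw [hQcw, abs_sq_cast w]
  have hd1 : (1:ℂ) - (starRingEnd ℂ) w * z ≠ 0 := one_sub_mul_ne _ _ hcw (le_of_lt hz)
  have hd2 : (1:ℂ) - w * (starRingEnd ℂ) w ≠ 0 := one_sub_mul_ne _ _ hw (le_of_lt hcw)
  have hd3 : (1:ℂ) - z * (starRingEnd ℂ) w ≠ 0 := one_sub_mul_ne _ _ hz (le_of_lt hcw)
  have hd4 : (starRingEnd ℂ) w * z - 1 ≠ 0 := by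
    intro h; exact hd1 (by linear_combination -h)
  have hRHS : (-1:ℂ) ^ α * ((starRingEnd ℂ) w / (1 - w * (starRingEnd ℂ) w)) ^ (α + 1) *
        ((w - z) / (1 - (starRingEnd ℂ) w * z)) ^ (α + 1) *
        (Blaschke a (n - α) z * (starRingEnd ℂ) (Blaschke a (n - α) w)) /
          ((starRingEnd ℂ) w * z - 1) =
      -((((-(w - z)) / (1 - (starRingEnd ℂ) w * z)) ^ (α + 1)) *
        (((starRingEnd ℂ) w / (1 - w * (starRingEnd ℂ) w)) ^ (α + 1) *
        (Blaschke a (n - α) z * (starRingEnd ℂ) (Blaschke a (n - α) w)) /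
          ((starRingEnd ℂ) w * z - 1))) := by
    rw [show (-1:ℂ) ^ α * ((starRingEnd ℂ) w / (1 - w * (starRingEnd ℂ) w)) ^ (α + 1) *
        ((w - z) / (1 - (starRingEnd ℂ) w * z)) ^ (α + 1) *
        (Blaschke a (n - α) z * (starRingEnd ℂ) (Blaschke a (n - α) w)) /
          ((starRingEnd ℂ) w * z - 1) =
        ((-1:ℂ) ^ α * ((w - z) / (1 - (starRingEnd ℂ) w * z)) ^ (α + 1)) *
        (((starRingEnd ℂ) w / (1 - w * (starRingEnd ℂ) w)) ^ (α + 1) *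
        (Blaschke a (n - α) z * (starRingEnd ℂ) (Blaschke a (n - α) w)) /
          ((starRingEnd ℂ) w * z - 1)) from by ring]
    rw [keyfrac α (w - z) (1 - (starRingEnd ℂ) w * z)]
    ring
  rw [hRHS]
  rw [show -(w - z) = z - w by ring]
  generalize ((z - w) / (1 - (starRingEnd ℂ) w * z)) ^ (α + 1) = X
  rw [div_pow]
  field_simp
  ring
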